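/- Let D be an API-domain with integral closure D̄ (in its quotient field) such that the conductor [D : D̄] = {x ∈ D : x·D̄ ⊆ D} is nonzero. Then D ⊆ D̄ is a bounded root extension. If moreover D is quasilocal and not a field, then D̄ is a DVR. -/

import Mathlib

/-- `D` is an almost principal ideal (API-) domain: for every nonempty set `S` of nonzero
elements of `D` there is a positive integer `n` such that the ideal generated by the `n`-th
powers of the elements of `S` is principal. -/
def IsAPIDomain (D : Type*) [CommRing D] : Prop :=
  ∀ S : Set D, S.Nonempty → (∀ a ∈ S, a ≠ 0) →
    ∃ n : ℕ, 0 < n ∧ (Ideal.span ((fun a => a ^ n) '' S)).IsPrincipal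

section Aux

variable {D K : Type*} [CommRing D] [IsDomain D] [Field K] [Algebra D K] [IsFractionRing D K]

/-- Finite families in a valuation ring have a dvd-minimal element. -/
lemma aux_exists_dvd_all {R : Type*} [CommRing R] [IsDomain R] [ValuationRing R]
    {β : Type*} (s : Finset β) (f : β → R) (hs : s.Nonempty) :
    ∃ b ∈ s, ∀ b' ∈ s, f b ∣ f b' := by
  classical
  induction s using Finset.induction_on with
  | empty => exact absurd hs (by simp)
  | @insert a s ha ih =>
    rcases s.eq_empty_or_nonempty with rfl | hsne
    · exact ⟨a, Finset.mem_insert_self _ _, by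
        intro b' hb'
        rcases Finset.mem_insert.mp hb' with rfl | h
        · exact dvd_rfl
        · simp at h⟩
    · obtain ⟨b, hb, hball⟩ := ih hsne
      rcases ValuationRing.dvd_total (f a) (f b) with h | h
      · refine ⟨a, Finset.mem_insert_self _ _, ?_⟩
        intro b' hb'
        rcases Finset.mem_insert.mp hb' with rfl | h'
        · exact dvd_rfl
        · exact h.trans (hball b' h')
      · refine ⟨b, Finset.mem_insert_of_mem hb, ?_⟩
        intro b' hb'
        rcases Finset.mem_insert.mp hb' with rfl | h'
        · exact h
        · exact hball b' h'

/-- Bounded root extension part. -/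
lemma aux_boundedRoot (hD : IsAPIDomain D)
    (hcond : ∃ c : D, c ≠ 0 ∧
      ∀ y ∈ integralClosure D K, algebraMap D K c * y ∈ (algebraMap D K).range) :
    ∃ n : ℕ, 0 < n ∧ ∀ x ∈ integralClosure D K, x ^ n ∈ (algebraMap D K).range := by
  obtain ⟨c, hc0, hc⟩ := hcond
  set φ := algebraMap D K with hφ
  have hinj : Function.Injective φ := IsFractionRing.injective D K
  have hφc : φ c ≠ 0 := fun h => hc0 (hinj (by simpa using h))
  set S : Set D := {a : D | a ≠ 0 ∧ ∃ x ∈ integralClosure D K, φ a = φ c * x} with hS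
  have hcS : c ∈ S := ⟨hc0, 1, one_mem _, (mul_one _).symm⟩
  obtain ⟨n, hn, ⟨d, hd⟩⟩ := hD S ⟨c, hcS⟩ (fun a ha => ha.1)
  rw [Ideal.submodule_span_eq] at hd
  -- d ≠ 0
  have hcn_mem : c ^ n ∈ Ideal.span {d} := by
    rw [← hd]; exact Ideal.subset_span ⟨c, hcS, rfl⟩
  have hd0 : d ≠ 0 := by
    rintro rfl
    rw [Ideal.span_singleton_eq_bot.mpr rfl, Ideal.mem_bot] at hcn_mem
    exact pow_ne_zero n hc0 hcn_mem
  -- φ d = φ c ^ n * t with t in the integral closure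
  have hdspan : φ d ∈ Submodule.span D (φ '' ((fun a => a ^ n) '' S)) := by
    have : d ∈ Ideal.span ((fun a => a ^ n) '' S) := by
      rw [hd]; exact Ideal.mem_span_singleton_self d
    have := Submodule.mem_map_of_mem (f := Algebra.linearMap D K) this
    rw [← Ideal.submodule_span_eq, Submodule.map_span] at this
    simpa [hφ, Algebra.coe_linearMap] using this
  have ht : ∃ t ∈ integralClosure D K, φ d = φ c ^ n * t := by
    refine Submodule.span_induction ?_ ⟨0, zero_mem _, by simp⟩ ?_ ?_ hdspan
    · rintro _ ⟨_, ⟨a, ⟨_, x, hx, hax⟩, rfl⟩, rfl⟩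
      refine ⟨x ^ n, pow_mem hx n, ?_⟩
      rw [map_pow, hax, mul_pow]
    · rintro y z - - ⟨ty, hty, hy⟩ ⟨tz, htz, hz⟩
      exact ⟨ty + tz, add_mem hty htz, by rw [hy, hz, mul_add]⟩
    · rintro r y - ⟨ty, hty, hy⟩
      refine ⟨r • ty, Subalgebra.smul_mem _ hty r, ?_⟩
      rw [hy]; exact (mul_smul_comm r _ ty).symm
  obtain ⟨t, htR, htd⟩ := ht
  have ht0 : t ≠ 0 := by
    rintro rfl
    rw [mul_zero] at htd
    exact hd0 (hinj (by simpa using htd))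
  -- the key rule
  have rule : ∀ x ∈ integralClosure D K, x ≠ 0 → ∃ r : D, x ^ n = t * φ r := by
    intro x hx hx0
    obtain ⟨a, ha⟩ := hc x hx
    have ha0 : a ≠ 0 := by
      rintro rfl
      rw [map_zero] at ha
      exact hφc (by
        rcases mul_eq_zero.mp ha.symm with h | h
        · exact h
        · exact absurd h hx0)
    have haS : a ∈ S := ⟨ha0, x, hx, ha⟩
    have : a ^ n ∈ Ideal.span {d} := by
      rw [← hd]; exact Ideal.subset_span ⟨a, haS, rfl⟩
    obtain ⟨s, hs⟩ := Ideal.mem_span_singleton'.mp this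
    refine ⟨s, ?_⟩
    have e1 : φ c ^ n * x ^ n = φ c ^ n * (t * φ s) := by
      rw [← mul_pow, ← ha, ← map_pow, ← hs, map_mul, htd]; ring
    exact mul_left_cancel₀ (pow_ne_zero n hφc) e1
  -- t ^ (2n - 1) is in the range
  have hts : t ^ (2 * n - 1) ∈ (algebraMap D K).range := by
    obtain ⟨r, hr⟩ := rule (t ^ 2) (pow_mem htR 2) (pow_ne_zero 2 ht0)
    have h2n : 2 * n = 1 + (2 * n - 1) := by omega
    rw [← pow_mul, h2n, pow_add, pow_one] at hr
    exact ⟨r, (mul_left_cancel₀ ht0 hr).symm⟩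
  obtain ⟨w, hw⟩ := hts
  refine ⟨n * (2 * n - 1), Nat.mul_pos hn (by omega), ?_⟩
  intro x hx
  by_cases hx0 : x = 0
  · subst hx0
    rw [zero_pow (Nat.mul_pos hn (by omega)).ne']
    exact ⟨0, map_zero _⟩
  · obtain ⟨r, hr⟩ := rule x hx hx0
    refine ⟨w * r ^ (2 * n - 1), ?_⟩
    rw [map_mul, map_pow, hw, pow_mul, hr, mul_pow]

end Aux

section Aux2

variable {D K : Type*} [CommRing D] [IsDomain D] [Field K] [Algebra D K] [IsFractionRing D K]

/-- In a quasilocal API-domain, powers of any two elements are comparable. -/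
lemma aux_almostVal (hD : IsAPIDomain D) (hL : IsLocalRing D) (a b : D)
    (ha : a ≠ 0) (hb : b ≠ 0) :
    ∃ m : ℕ, 0 < m ∧ (a ^ m ∣ b ^ m ∨ b ^ m ∣ a ^ m) := by
  obtain ⟨m, hm, ⟨d, hd⟩⟩ := hD {a, b} ⟨a, Set.mem_insert _ _⟩
    (by rintro x (rfl | rfl) <;> assumption)
  rw [Ideal.submodule_span_eq, Set.image_pair] at hd
  have hamem : a ^ m ∈ Ideal.span {d} := by
    rw [← hd]; exact Ideal.subset_span (Set.mem_insert _ _)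
  have hbmem : b ^ m ∈ Ideal.span {d} := by
    rw [← hd]; exact Ideal.subset_span (Set.mem_insert_of_mem _ rfl)
  obtain ⟨a', ha'⟩ := Ideal.mem_span_singleton'.mp hamem
  obtain ⟨b', hb'⟩ := Ideal.mem_span_singleton'.mp hbmem
  have hdmem : d ∈ Ideal.span ({a ^ m, b ^ m} : Set D) := by
    rw [hd]; exact Ideal.mem_span_singleton_self d
  obtain ⟨r, s, hrs⟩ := Ideal.mem_span_pair.mp hdmem
  have hd0 : d ≠ 0 := by
    rintro rfl
    rw [mul_zero] at ha'
    exact pow_ne_zero m ha ha'.symm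
  have key : r * a' + s * b' = 1 := by
    apply mul_right_cancel₀ hd0
    rw [one_mul, add_mul, mul_assoc, mul_assoc, ha', hb']
    exact hrs
  have : IsUnit (r * a') ∨ IsUnit (s * b') := by
    haveI := hL
    exact IsLocalRing.isUnit_or_isUnit_of_isUnit_add (by rw [key]; exact isUnit_one)
  refine ⟨m, hm, ?_⟩
  rcases this with h | h
  · left
    have : IsUnit a' := isUnit_of_mul_isUnit_right h
    obtain ⟨u, hu⟩ := this.exists_left_inv
    refine ⟨u * b', ?_⟩
    calc b ^ m = b' * d := hb'.symm
      _ = b' * ((u * a') * d) := by rw [hu, one_mul]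
      _ = a ^ m * (u * b') := by rw [← ha']; ring
  · right
    have : IsUnit b' := isUnit_of_mul_isUnit_right h
    obtain ⟨u, hu⟩ := this.exists_left_inv
    refine ⟨u * a', ?_⟩
    calc a ^ m = a' * d := ha'.symm
      _ = a' * ((u * b') * d) := by rw [hu, one_mul]
      _ = b ^ m * (u * a') := by rw [← hb']; ring

omit [IsDomain D] [IsFractionRing D K] in
/-- Cancellation of powers in the integral closure. -/
lemma aux_pow_dvd {x y r : K} (hx0 : x ≠ 0) {k : ℕ} (hk : 0 < k)
    (hr : r ∈ integralClosure D K) (h : y ^ k = x ^ k * r) :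
    ∃ s ∈ integralClosure D K, y = x * s := by
  refine ⟨y / x, ?_, (mul_div_cancel₀ y hx0).symm⟩
  have : (y / x) ^ k = r := by
    rw [div_pow, h, mul_comm, mul_div_assoc, div_self (pow_ne_zero k hx0), mul_one]
  have : IsIntegral D ((y / x) ^ k) := this ▸ hr
  exact IsIntegral.of_pow hk this

/-- Divisibility in the integral closure is total. -/
lemma aux_dvd_total (hD : IsAPIDomain D) (hL : IsLocalRing D) {N : ℕ} (hN : 0 < N)
    (hroot : ∀ x ∈ integralClosure D K, x ^ N ∈ (algebraMap D K).range)
    (x y : K) (hx : x ∈ integralClosure D K) (hy : y ∈ integralClosure D K) :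
    (∃ s ∈ integralClosure D K, y = x * s) ∨ (∃ s ∈ integralClosure D K, x = y * s) := by
  set φ := algebraMap D K with hφ
  have hinj : Function.Injective φ := IsFractionRing.injective D K
  by_cases hx0 : x = 0
  · exact Or.inr ⟨0, zero_mem _, by rw [hx0, mul_zero]⟩
  by_cases hy0 : y = 0
  · exact Or.inl ⟨0, zero_mem _, by rw [hy0, mul_zero]⟩
  obtain ⟨a, ha⟩ := hroot x hx
  obtain ⟨b, hb⟩ := hroot y hy
  have ha0 : a ≠ 0 := by
    rintro rfl; rw [map_zero] at ha; exact pow_ne_zero N hx0 ha.symm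
  have hb0 : b ≠ 0 := by
    rintro rfl; rw [map_zero] at hb; exact pow_ne_zero N hy0 hb.symm
  obtain ⟨m, hm, hor⟩ := aux_almostVal hD hL a b ha0 hb0
  rcases hor with ⟨u, hu⟩ | ⟨u, hu⟩
  · left
    have h : y ^ (N * m) = x ^ (N * m) * φ u := by
      rw [pow_mul, pow_mul, ← hb, ← ha, ← map_pow, ← map_pow, ← map_mul, ← hu]
    exact aux_pow_dvd hx0 (Nat.mul_pos hN hm) (isIntegral_algebraMap) h
  · right
    have h : x ^ (N * m) = y ^ (N * m) * φ u := by
      rw [pow_mul, pow_mul, ← hb, ← ha, ← map_pow, ← map_pow, ← map_mul, ← hu]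
    exact aux_pow_dvd hy0 (Nat.mul_pos hN hm) (isIntegral_algebraMap) h

end Aux2


/-- if `D` is an API-domain whose conductor `[D : D̄]` in its integral closure
`D̄` is nonzero, then `D ⊆ D̄` is a bounded root extension; and if moreover `D` is quasilocal
and not a field, then `D̄` is a DVR. -/
theorem stmt_10 (D K : Type*) [CommRing D] [IsDomain D] [Field K] [Algebra D K]
    [IsFractionRing D K] (hD : IsAPIDomain D)
    (hcond : ∃ c : D, c ≠ 0 ∧
      ∀ y ∈ integralClosure D K, algebraMap D K c * y ∈ (algebraMap D K).range) :
    (∃ n : ℕ, 0 < n ∧ ∀ x ∈ integralClosure D K, x ^ n ∈ (algebraMap D K).range) ∧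
      (IsLocalRing D → ¬IsField D → IsDiscreteValuationRing (integralClosure D K)) := by
  obtain ⟨n, hn, hroot⟩ := aux_boundedRoot hD hcond
  refine ⟨⟨n, hn, hroot⟩, ?_⟩
  intro hL hnf
  haveI := hL
  set φ := algebraMap D K with hφ
  have hinj : Function.Injective φ := IsFractionRing.injective D K
  set ψ := algebraMap D ↥(integralClosure D K) with hψ
  have hψcoe : ∀ a : D, ((ψ a : ↥(integralClosure D K)) : K) = φ a := fun a =>
    (IsScalarTower.algebraMap_apply D ↥(integralClosure D K) K a).symm
  -- valuation ring
  haveI hpre : PreValuationRing ↥(integralClosure D K) := by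
    refine ⟨fun p q => ?_⟩
    rcases aux_dvd_total hD hL hn hroot (p : K) (q : K) p.2 q.2 with ⟨s, hs, h⟩ | ⟨s, hs, h⟩
    · exact ⟨⟨s, hs⟩, Or.inl (Subtype.ext (by rw [MulMemClass.coe_mul]; exact h.symm))⟩
    · exact ⟨⟨s, hs⟩, Or.inr (Subtype.ext (by rw [MulMemClass.coe_mul]; exact h.symm))⟩
  haveI hVR : ValuationRing ↥(integralClosure D K) := { hpre with }
  -- principal ideal ring
  haveI hPID : IsPrincipalIdealRing ↥(integralClosure D K) := by
    constructor
    intro I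
    by_cases hI : I = ⊥
    · rw [hI]; exact ⟨⟨0, (Ideal.span_zero).symm⟩⟩
    obtain ⟨x₀, hx₀I, hx₀0⟩ := (Submodule.ne_bot_iff I).mp hI
    set T : Set D :=
      {a : D | a ≠ 0 ∧ ∃ x : ↥(integralClosure D K), x ∈ I ∧ φ a = (x : K) ^ n} with hT
    have hTne : T.Nonempty := by
      obtain ⟨a₀, ha₀⟩ := hroot (x₀ : K) x₀.2
      have hc0 : (x₀ : K) ≠ 0 := fun h => hx₀0 (Subtype.ext h)
      refine ⟨a₀, ?_, x₀, hx₀I, ha₀⟩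
      rintro rfl; rw [map_zero] at ha₀; exact pow_ne_zero n hc0 ha₀.symm
    obtain ⟨m, hm, ⟨d, hd⟩⟩ := hD T hTne (fun a ha => ha.1)
    rw [Ideal.submodule_span_eq] at hd
    have hd0 : d ≠ 0 := by
      obtain ⟨a₀, ha₀T⟩ := hTne
      have : a₀ ^ m ∈ Ideal.span {d} := by
        rw [← hd]; exact Ideal.subset_span ⟨a₀, ha₀T, rfl⟩
      rintro rfl
      rw [Ideal.span_singleton_eq_bot.mpr rfl, Ideal.mem_bot] at this
      exact pow_ne_zero m ha₀T.1 this
    have claimA : ∀ x : ↥(integralClosure D K), x ∈ I → x ≠ 0 → ψ d ∣ x ^ (n * m) := by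
      intro x hxI hx0
      obtain ⟨a, ha⟩ := hroot (x : K) x.2
      have hc0 : (x : K) ≠ 0 := fun h => hx0 (Subtype.ext h)
      have ha0 : a ≠ 0 := by
        rintro rfl; rw [map_zero] at ha; exact pow_ne_zero n hc0 ha.symm
      have haT : a ∈ T := ⟨ha0, x, hxI, ha⟩
      have : a ^ m ∈ Ideal.span {d} := by
        rw [← hd]; exact Ideal.subset_span ⟨a, haT, rfl⟩
      obtain ⟨s, hs⟩ := Ideal.mem_span_singleton'.mp this
      refine ⟨ψ s, Subtype.ext ?_⟩
      rw [MulMemClass.coe_mul, SubmonoidClass.coe_pow, hψcoe, hψcoe, pow_mul, ← ha,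
        ← map_pow, ← map_mul, mul_comm d s, hs]
    have hdmem : d ∈ Submodule.span D ((fun a => a ^ m) '' T) := by
      rw [Ideal.submodule_span_eq, hd]; exact Ideal.mem_span_singleton_self d
    obtain ⟨co, hsupp, hsum⟩ := Submodule.mem_span_set.mp hdmem
    have hsupp_ne : co.support.Nonempty := by
      rcases Finset.eq_empty_or_nonempty co.support with h | h
      · exact absurd (by rw [← hsum, Finsupp.sum, h, Finset.sum_empty]) hd0
      · exact h
    obtain ⟨b₁, hb₁supp, hb₁min⟩ := aux_exists_dvd_all co.support (fun b => ψ b) hsupp_ne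
    have hdvd_g : ψ b₁ ∣ ψ d := by
      rw [← hsum]
      have hmap : ψ (co.sum fun b r => r • b) = ∑ b ∈ co.support, ψ (co b) * ψ b := by
        rw [Finsupp.sum, map_sum]
        exact Finset.sum_congr rfl fun b _ => by rw [smul_eq_mul, map_mul]
      rw [hmap]
      exact Finset.dvd_sum fun b hb => Dvd.dvd.mul_left (hb₁min b hb) _
    obtain ⟨a₁, ha₁T, hb₁eq⟩ := hsupp hb₁supp
    obtain ⟨ha₁0, x₁, hx₁I, hx₁⟩ := ha₁T
    have hx₁c0 : (x₁ : K) ≠ 0 := by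
      intro h
      apply ha₁0
      apply hinj
      rw [hx₁, h, map_zero, zero_pow hn.ne']
    have hψb₁ : ψ b₁ = x₁ ^ (n * m) := by
      refine Subtype.ext ?_
      rw [SubmonoidClass.coe_pow, hψcoe, ← hb₁eq, map_pow, hx₁, ← pow_mul]
    refine ⟨⟨x₁, ?_⟩⟩
    apply le_antisymm
    · intro x hxI
      rw [Ideal.submodule_span_eq, Ideal.mem_span_singleton]
      by_cases hx0 : x = 0
      · rw [hx0]; exact dvd_zero _
      obtain ⟨s, hsA⟩ := claimA x hxI hx0
      obtain ⟨u, hu⟩ := hψb₁ ▸ hdvd_g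
      have hKeq : (x : K) ^ (n * m) = (x₁ : K) ^ (n * m) * ((u * s : ↥(integralClosure D K)) : K) := by
        have := congrArg (fun z : ↥(integralClosure D K) => (z : K)) (hsA.trans (by rw [hu]))
        simpa [SubmonoidClass.coe_pow, MulMemClass.coe_mul, mul_assoc] using this
      obtain ⟨s', hs'mem, hs'⟩ :=
        aux_pow_dvd hx₁c0 (Nat.mul_pos hn hm) (u * s).2 hKeq
      exact ⟨⟨s', hs'mem⟩, Subtype.ext (by rw [MulMemClass.coe_mul]; exact hs')⟩
    · rw [Ideal.submodule_span_eq, Ideal.span_le, Set.singleton_subset_iff]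
      exact hx₁I
  -- not a field
  have hDnotunit : ∃ a : D, a ≠ 0 ∧ ∀ b : D, a * b ≠ 1 := by
    by_contra h
    push_neg at h
    exact hnf ⟨exists_pair_ne D, mul_comm, fun ha => h _ ha⟩
  have hnfR : ¬IsField ↥(integralClosure D K) := by
    intro hfield
    obtain ⟨a, ha0, hano⟩ := hDnotunit
    have hψa0 : ψ a ≠ 0 := by
      intro h
      apply ha0
      apply hinj
      have := congrArg (fun z : ↥(integralClosure D K) => (z : K)) h
      simpa [hψcoe] using this
    obtain ⟨y, hy⟩ := hfield.mul_inv_cancel hψa0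
    have hyK : φ a * (y : K) = 1 := by
      have := congrArg (fun z : ↥(integralClosure D K) => (z : K)) hy
      simpa [MulMemClass.coe_mul, hψcoe] using this
    obtain ⟨b, hb⟩ := hroot (y : K) y.2
    have : φ (a ^ n * b) = φ 1 := by
      rw [map_mul, map_pow, map_one, hb, ← mul_pow, hyK, one_pow]
    have hab : a ^ n * b = 1 := hinj this
    apply hano (a ^ (n - 1) * b)
    have hn' : n - 1 + 1 = n := by omega
    rw [← mul_assoc, ← pow_succ', hn']
    exact hab
  refine { toIsPrincipalIdealRing := hPID, toIsLocalRing := inferInstance,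
           not_a_field' := ?_ }
  intro h
  exact hnfR (IsLocalRing.isField_iff_maximalIdeal_eq.mpr h)
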